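/- Let P ⊂ GL₄(ℝ) be the standard parabolic of type (2,2), S₄ the Shalika subgroup {diag(g,g)·(I + (0 b; 0 0)) : g ∈ GL₂(ℝ), b ∈ M₂(ℝ)}, and X = P\GL₄(ℝ). Then there are exactly four S₄-orbits on X, represented by the permutation matrices attached to σ₁ = (1,2,3,4), σ₂ = (1,3,2,4), σ₃ = (3,1,2,4), σ₄ = (3,4,1,2) in S₄, and the orbit of σ₄ is open; moreover the stabilizer P^{σ₄} ∩ S₄ is isomorphic to GL₂(ℝ) embedded diagonally. -/

import Mathlib

open Matrix

noncomputable section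

/-- The block upper-triangular `(2,2)` standard parabolic `P ⊂ GL₄(ℝ)` (as a subset). -/
def Pset : Set (GL (Fin 4) ℝ) :=
  {g | ∀ i j : Fin 4, 2 ≤ (i : ℕ) → (j : ℕ) < 2 →
    (g : Matrix (Fin 4) (Fin 4) ℝ) i j = 0}

/-- The Shalika subgroup `S₄ = {diag(a,a)·(1 b; 0 1)} ⊂ GL₄(ℝ)` (as a subset): the
invertible block matrices of the form `(a, c; 0, a)`. -/
def Sset : Set (GL (Fin 4) ℝ) :=
  {g | (∀ i j : Fin 4, 2 ≤ (i : ℕ) → (j : ℕ) < 2 →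
          (g : Matrix (Fin 4) (Fin 4) ℝ) i j = 0) ∧
       (∀ i j : Fin 4, (i : ℕ) < 2 → (j : ℕ) < 2 →
          (g : Matrix (Fin 4) (Fin 4) ℝ) i j =
            (g : Matrix (Fin 4) (Fin 4) ℝ) (i + 2) (j + 2))}

/-- The permutation matrix of `σ` (convention `ω E_{j,k} ω⁻¹ = E_{σ(j),σ(k)}`, i.e. the
matrix with `1` in position `(σ(j), j)`). -/
def permMat (σ : Equiv.Perm (Fin 4)) : Matrix (Fin 4) (Fin 4) ℝ :=
  fun i j => if i = σ j then 1 else 0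

lemma permMat_mul_inv (σ : Equiv.Perm (Fin 4)) : permMat σ * permMat σ⁻¹ = 1 := by
  ext i j
  simp only [permMat, Matrix.mul_apply, Matrix.one_apply, mul_ite, mul_one, mul_zero,
    ite_mul, one_mul, zero_mul]
  rw [Finset.sum_ite_eq' Finset.univ (σ⁻¹ j)]
  simp [Equiv.apply_eq_iff_eq_symm_apply, eq_comm]

/-- The permutation matrix of `σ` as an element of `GL₄(ℝ)`. -/
def permGL (σ : Equiv.Perm (Fin 4)) : GL (Fin 4) ℝ :=
  ⟨permMat σ, permMat σ⁻¹, permMat_mul_inv σ, by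
    simpa using permMat_mul_inv σ⁻¹⟩

/-- The permutations `σ₁ = (1,2,3,4)`, `σ₂ = (1,3,2,4)`, `σ₃ = (3,1,2,4)`,
`σ₄ = (3,4,1,2)` (one-line notation, `σ(k) = iₖ`), written 0-based. -/
def σs : Fin 4 → Equiv.Perm (Fin 4)
  | 0 => 1
  | 1 => Equiv.swap 1 2
  | 2 => Equiv.swap 0 1 * Equiv.swap 0 2
  | 3 => Equiv.swap 0 2 * Equiv.swap 1 3

/-- The corresponding representatives in `GL₄(ℝ)`. -/
def w (i : Fin 4) : GL (Fin 4) ℝ := permGL (σs i)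

/-- There are exactly four `S₄`-orbits on `X = P\GL₄(ℝ)` (`P` the
`(2,2)` parabolic, `S₄` the Shalika subgroup), represented by the permutation matrices of
`σ₁ = (1,2,3,4)`, `σ₂ = (1,3,2,4)`, `σ₃ = (3,1,2,4)`, `σ₄ = (3,4,1,2)`; the orbit of `σ₄`
is open; and the stabilizer `P^{σ₄} ∩ S₄` is `GL₂(ℝ)` embedded diagonally. -/
abbrev e4 : (Fin 2 ⊕ Fin 2) ≃ Fin 4 := finSumFinEquiv

def bm (M : Matrix (Fin 4) (Fin 4) ℝ) : Matrix (Fin 2 ⊕ Fin 2) (Fin 2 ⊕ Fin 2) ℝ :=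
  M.submatrix e4 e4

lemma bm_mul (M N : Matrix (Fin 4) (Fin 4) ℝ) : bm (M * N) = bm M * bm N := by
  simp [bm, Matrix.submatrix_mul_equiv]

lemma bm_det (M : Matrix (Fin 4) (Fin 4) ℝ) : (bm M).det = M.det :=
  Matrix.det_submatrix_equiv_self _ _

lemma e4_inl (i : Fin 2) : e4 (Sum.inl i) = ⟨i.val, by omega⟩ := by
  rw [finSumFinEquiv_apply_left]; exact Fin.ext (by simp)

lemma e4_inr (i : Fin 2) : e4 (Sum.inr i) = ⟨i.val + 2, by omega⟩ := by
  rw [finSumFinEquiv_apply_right]; exact Fin.ext (by simp [Fin.natAdd]; omega)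

lemma lower_iff (M : Matrix (Fin 4) (Fin 4) ℝ) :
    (∀ i j : Fin 4, 2 ≤ (i : ℕ) → (j : ℕ) < 2 → M i j = 0) ↔ (bm M).toBlocks₂₁ = 0 := by
  constructor
  · intro h
    ext i j
    simp only [toBlocks₂₁, of_apply, bm, submatrix_apply, Matrix.zero_apply]
    exact h _ _ (by rw [e4_inr]; simp) (by rw [e4_inl]; exact j.isLt)
  · intro h i j hi hj
    have h2 : i = e4 (Sum.inr ⟨i.val - 2, by omega⟩) := by rw [e4_inr]; exact Fin.ext (by simp only [Fin.val_mk]; omega)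
    have h3 : j = e4 (Sum.inl ⟨j.val, hj⟩) := by rw [e4_inl]
    rw [h2, h3]
    have := congrFun (congrFun h ⟨i.val - 2, by omega⟩) ⟨j.val, hj⟩
    simpa [toBlocks₂₁, bm] using this

lemma diag_iff (M : Matrix (Fin 4) (Fin 4) ℝ) :
    (∀ i j : Fin 4, (i : ℕ) < 2 → (j : ℕ) < 2 → M i j = M (i + 2) (j + 2)) ↔
      (bm M).toBlocks₁₁ = (bm M).toBlocks₂₂ := by
  have key : ∀ i : Fin 4, ∀ hi : (i : ℕ) < 2, i + 2 = e4 (Sum.inr ⟨i.val, hi⟩) := by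
    intro i hi
    rw [e4_inr]
    refine Fin.ext ?_
    have : ((2 : Fin 4) : ℕ) = 2 := rfl
    rw [Fin.val_add]
    simp [this]
    omega
  constructor
  · intro h
    ext i j
    simp only [toBlocks₁₁, toBlocks₂₂, of_apply, bm, submatrix_apply]
    rw [e4_inl, e4_inl, e4_inr, e4_inr]
    have := h ⟨i.val, by omega⟩ ⟨j.val, by omega⟩ i.isLt j.isLt
    rw [key _ i.isLt, key _ j.isLt, e4_inr, e4_inr] at this
    simpa using this
  · intro h i j hi hj
    have := congrFun (congrFun h ⟨i.val, hi⟩) ⟨j.val, hj⟩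
    simp only [toBlocks₁₁, toBlocks₂₂, of_apply, bm, submatrix_apply] at this
    rw [e4_inl, e4_inl] at this
    rw [key _ hi, key _ hj]
    simpa using this

lemma Pset_iff (g : GL (Fin 4) ℝ) :
    g ∈ Pset ↔ (bm (g : Matrix (Fin 4) (Fin 4) ℝ)).toBlocks₂₁ = 0 := lower_iff _

lemma Sset_iff (g : GL (Fin 4) ℝ) :
    g ∈ Sset ↔ (bm (g : Matrix (Fin 4) (Fin 4) ℝ)).toBlocks₂₁ = 0 ∧
      (bm (g : Matrix (Fin 4) (Fin 4) ℝ)).toBlocks₁₁ = (bm (g : Matrix (Fin 4) (Fin 4) ℝ)).toBlocks₂₂ :=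
  and_congr (lower_iff _) (diag_iff _)
def E00 : Matrix (Fin 2) (Fin 2) ℝ := !![1,0;0,0]
def E01 : Matrix (Fin 2) (Fin 2) ℝ := !![0,1;0,0]
def E10 : Matrix (Fin 2) (Fin 2) ℝ := !![0,0;1,0]
def E11 : Matrix (Fin 2) (Fin 2) ℝ := !![0,0;0,1]

def wA : Fin 4 → Matrix (Fin 2) (Fin 2) ℝ := ![1, E00, E01, 0]
def wB : Fin 4 → Matrix (Fin 2) (Fin 2) ℝ := ![0, E10, E10, 1]
def wC : Fin 4 → Matrix (Fin 2) (Fin 2) ℝ := ![0, E01, E00, 1]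
def wD : Fin 4 → Matrix (Fin 2) (Fin 2) ℝ := ![1, E11, E11, 0]

lemma bm_w (i : Fin 4) :
    bm ((w i : GL (Fin 4) ℝ) : Matrix (Fin 4) (Fin 4) ℝ) =
      fromBlocks (wA i) (wB i) (wC i) (wD i) := by
  fin_cases i <;>
  · ext x y
    rcases x with x | x <;> rcases y with y | y <;> fin_cases x <;> fin_cases y <;>
      rfl
def Cblk (g : GL (Fin 4) ℝ) : Matrix (Fin 2) (Fin 2) ℝ :=
  (bm ((g : Matrix (Fin 4) (Fin 4) ℝ))).toBlocks₂₁
def Dblk (g : GL (Fin 4) ℝ) : Matrix (Fin 2) (Fin 2) ℝ :=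
  (bm ((g : Matrix (Fin 4) (Fin 4) ℝ))).toBlocks₂₂

lemma cancel_unit {a X Y : Matrix (Fin 2) (Fin 2) ℝ} (ha : IsUnit a) (h : X * a = Y * a) :
    X = Y := by
  obtain ⟨u, rfl⟩ := ha
  have h2 : X * (u : Matrix (Fin 2) (Fin 2) ℝ) * ((u⁻¹ : (Matrix (Fin 2) (Fin 2) ℝ)ˣ) : Matrix (Fin 2) (Fin 2) ℝ) =
      Y * (u : Matrix (Fin 2) (Fin 2) ℝ) * ((u⁻¹ : (Matrix (Fin 2) (Fin 2) ℝ)ˣ) : Matrix (Fin 2) (Fin 2) ℝ) := by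
    rw [h]
  simpa only [Units.mul_inv_cancel_right] using h2

lemma bm_unit (g : GL (Fin 4) ℝ) : IsUnit (bm (g : Matrix (Fin 4) (Fin 4) ℝ)) := by
  rw [Matrix.isUnit_iff_isUnit_det, bm_det, ← Matrix.isUnit_iff_isUnit_det]
  exact g.isUnit

lemma P_block_unit (p : GL (Fin 4) ℝ) (hp : p ∈ Pset) :
    IsUnit ((bm (p : Matrix (Fin 4) (Fin 4) ℝ)).toBlocks₂₂) := by
  have h1 : IsUnit (bm (p : Matrix (Fin 4) (Fin 4) ℝ)).det := (Matrix.isUnit_iff_isUnit_det _).mp (bm_unit p)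
  rw [← fromBlocks_toBlocks (bm (p : Matrix (Fin 4) (Fin 4) ℝ)), (Pset_iff p).mp hp,
    det_fromBlocks_zero₂₁] at h1
  exact (Matrix.isUnit_iff_isUnit_det _).mpr (isUnit_of_mul_isUnit_right h1)

lemma coset_iff (i : Fin 4) (g : GL (Fin 4) ℝ) :
    (∃ p ∈ Pset, ∃ s ∈ Sset, g = p * w i * s) ↔
    ∃ h a c : Matrix (Fin 2) (Fin 2) ℝ, IsUnit h ∧ IsUnit a ∧
      Cblk g = h * wC i * a ∧ Dblk g = h * wC i * c + h * wD i * a := by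
  constructor
  · rintro ⟨p, hp, s, hs, rfl⟩
    obtain ⟨hs21, hsdiag⟩ := (Sset_iff s).mp hs
    have hsB : bm (s : Matrix (Fin 4) (Fin 4) ℝ) =
        fromBlocks ((bm (s : Matrix (Fin 4) (Fin 4) ℝ)).toBlocks₁₁)
          ((bm (s : Matrix (Fin 4) (Fin 4) ℝ)).toBlocks₁₂) 0
          ((bm (s : Matrix (Fin 4) (Fin 4) ℝ)).toBlocks₁₁) := by
      conv_lhs => rw [← fromBlocks_toBlocks (bm (s : Matrix (Fin 4) (Fin 4) ℝ))]
      rw [hs21, ← hsdiag]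
    have hpB : bm (p : Matrix (Fin 4) (Fin 4) ℝ) =
        fromBlocks ((bm (p : Matrix (Fin 4) (Fin 4) ℝ)).toBlocks₁₁)
          ((bm (p : Matrix (Fin 4) (Fin 4) ℝ)).toBlocks₁₂) 0
          ((bm (p : Matrix (Fin 4) (Fin 4) ℝ)).toBlocks₂₂) := by
      conv_lhs => rw [← fromBlocks_toBlocks (bm (p : Matrix (Fin 4) (Fin 4) ℝ))]
      rw [(Pset_iff p).mp hp]
    have hg : bm ((p * w i * s : GL (Fin 4) ℝ) : Matrix (Fin 4) (Fin 4) ℝ) =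
        bm (p : Matrix (Fin 4) (Fin 4) ℝ) * bm ((w i : GL (Fin 4) ℝ) : Matrix (Fin 4) (Fin 4) ℝ) *
          bm (s : Matrix (Fin 4) (Fin 4) ℝ) := by
      rw [Units.val_mul, Units.val_mul, bm_mul, bm_mul]
    refine ⟨(bm (p : Matrix (Fin 4) (Fin 4) ℝ)).toBlocks₂₂,
      (bm (s : Matrix (Fin 4) (Fin 4) ℝ)).toBlocks₁₁,
      (bm (s : Matrix (Fin 4) (Fin 4) ℝ)).toBlocks₁₂,
      P_block_unit p hp, ?_, ?_, ?_⟩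
    · -- a is a unit
      have h1 : IsUnit (bm (s : Matrix (Fin 4) (Fin 4) ℝ)).det := (Matrix.isUnit_iff_isUnit_det _).mp (bm_unit s)
      rw [hsB, det_fromBlocks_zero₂₁] at h1
      exact (Matrix.isUnit_iff_isUnit_det _).mpr (isUnit_of_mul_isUnit_right h1)
    · show (bm ((p * w i * s : GL (Fin 4) ℝ) : Matrix (Fin 4) (Fin 4) ℝ)).toBlocks₂₁ = _
      rw [hg]
      conv_lhs => rw [hpB, hsB, bm_w i]
      rw [fromBlocks_multiply, fromBlocks_multiply, toBlocks_fromBlocks₂₁]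
      noncomm_ring
    · show (bm ((p * w i * s : GL (Fin 4) ℝ) : Matrix (Fin 4) (Fin 4) ℝ)).toBlocks₂₂ = _
      rw [hg]
      conv_lhs => rw [hpB, hsB, bm_w i]
      rw [fromBlocks_multiply, fromBlocks_multiply, toBlocks_fromBlocks₂₂]
      noncomm_ring
  · rintro ⟨h, a, c, hh, ha, hC, hD⟩
    have hbmS : bm ((fromBlocks a c 0 a).submatrix ⇑e4.symm ⇑e4.symm) = fromBlocks a c 0 a := by
      show ((fromBlocks a c 0 a).submatrix ⇑e4.symm ⇑e4.symm).submatrix ⇑e4 ⇑e4 = _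
      rw [Matrix.submatrix_submatrix, Equiv.symm_comp_self, Matrix.submatrix_id_id]
    have hSu : IsUnit ((fromBlocks a c 0 a).submatrix ⇑e4.symm ⇑e4.symm) := by
      rw [Matrix.isUnit_iff_isUnit_det, ← bm_det, hbmS, det_fromBlocks_zero₂₁]
      exact ((Matrix.isUnit_iff_isUnit_det a).mp ha).mul ((Matrix.isUnit_iff_isUnit_det a).mp ha)
    set s : GL (Fin 4) ℝ := hSu.unit with hsdef
    have hsv : (s : Matrix (Fin 4) (Fin 4) ℝ) = (fromBlocks a c 0 a).submatrix ⇑e4.symm ⇑e4.symm :=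
      hSu.unit_spec
    have hsS : s ∈ Sset := by
      rw [Sset_iff, hsv, hbmS]
      simp [toBlocks_fromBlocks₂₁, toBlocks_fromBlocks₁₁, toBlocks_fromBlocks₂₂]
    set p : GL (Fin 4) ℝ := g * s⁻¹ * (w i)⁻¹ with hpdef
    have hmain : p * w i * s = g := by rw [hpdef]; group
    have hm : bm (p : Matrix (Fin 4) (Fin 4) ℝ) *
        bm ((w i : GL (Fin 4) ℝ) : Matrix (Fin 4) (Fin 4) ℝ) *
        bm (s : Matrix (Fin 4) (Fin 4) ℝ) = bm (g : Matrix (Fin 4) (Fin 4) ℝ) := by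
      rw [← bm_mul, ← bm_mul, ← Units.val_mul, ← Units.val_mul, hmain]
    set P11 := (bm (p : Matrix (Fin 4) (Fin 4) ℝ)).toBlocks₁₁ with hP11
    set P12 := (bm (p : Matrix (Fin 4) (Fin 4) ℝ)).toBlocks₁₂ with hP12
    set P21 := (bm (p : Matrix (Fin 4) (Fin 4) ℝ)).toBlocks₂₁ with hP21
    set P22 := (bm (p : Matrix (Fin 4) (Fin 4) ℝ)).toBlocks₂₂ with hP22
    have hpB : bm (p : Matrix (Fin 4) (Fin 4) ℝ) = fromBlocks P11 P12 P21 P22 :=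
      (fromBlocks_toBlocks _).symm
    rw [hpB, bm_w i, hsv, hbmS] at hm
    rw [fromBlocks_multiply, fromBlocks_multiply] at hm
    have eq21 : (P21 * wA i + P22 * wC i) * a = (h * wC i) * a := by
      have := congrArg Matrix.toBlocks₂₁ hm
      simp only [toBlocks_fromBlocks₂₁] at this
      rw [mul_zero, add_zero] at this
      rw [this]
      rw [← hC]
      rfl
    have eq21' : P21 * wA i + P22 * wC i = h * wC i := cancel_unit ha eq21
    have eq22 : (P21 * wB i + P22 * wD i) * a = (h * wD i) * a := by
      have h2 := congrArg Matrix.toBlocks₂₂ hm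
      simp only [toBlocks_fromBlocks₂₂] at h2
      rw [eq21'] at h2
      have h3 : h * wC i * c + (P21 * wB i + P22 * wD i) * a =
          h * wC i * c + h * wD i * a := h2.trans hD
      exact add_left_cancel h3
    have eq22' : P21 * wB i + P22 * wD i = h * wD i := cancel_unit ha eq22
    -- kill P21
    have hZ : fromBlocks (0 : Matrix (Fin 2) (Fin 2) ℝ) 0 P21 (P22 - h) *
        fromBlocks (wA i) (wB i) (wC i) (wD i) = 0 := by
      rw [fromBlocks_multiply]
      have e1 : P21 * wA i + (P22 - h) * wC i = 0 := by
        rw [sub_mul, ← eq21']; noncomm_ring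
      have e2 : P21 * wB i + (P22 - h) * wD i = 0 := by
        rw [sub_mul, ← eq22']; noncomm_ring
      rw [e1, e2]
      simp
    have hwinv : fromBlocks (wA i) (wB i) (wC i) (wD i) *
        bm (((w i)⁻¹ : GL (Fin 4) ℝ) : Matrix (Fin 4) (Fin 4) ℝ) = 1 := by
      rw [← bm_w i, ← bm_mul, ← Units.val_mul, mul_inv_cancel]
      simp [bm]
    have hZ0 : fromBlocks (0 : Matrix (Fin 2) (Fin 2) ℝ) 0 P21 (P22 - h) = 0 := by
      calc fromBlocks (0 : Matrix (Fin 2) (Fin 2) ℝ) 0 P21 (P22 - h)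
          = fromBlocks (0 : Matrix (Fin 2) (Fin 2) ℝ) 0 P21 (P22 - h) *
            (fromBlocks (wA i) (wB i) (wC i) (wD i) *
              bm (((w i)⁻¹ : GL (Fin 4) ℝ) : Matrix (Fin 4) (Fin 4) ℝ)) := by rw [hwinv, mul_one]
        _ = 0 := by rw [← mul_assoc, hZ, zero_mul]
    have hP21_0 : P21 = 0 := by
      have := congrArg Matrix.toBlocks₂₁ hZ0
      rw [toBlocks_fromBlocks₂₁] at this
      exact this.trans rfl
    exact ⟨p, (Pset_iff p).mpr hP21_0, s, hsS, hmain.symm⟩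
lemma bm_one : bm (1 : Matrix (Fin 4) (Fin 4) ℝ) = 1 := by
  simp [bm]

lemma no_common_kernel (g : GL (Fin 4) ℝ) {m : Matrix (Fin 2) (Fin 2) ℝ}
    (h1 : m * Cblk g = 0) (h2 : m * Dblk g = 0) : m = 0 := by
  have hz : fromBlocks (0 : Matrix (Fin 2) (Fin 2) ℝ) 0 0 m *
      bm (g : Matrix (Fin 4) (Fin 4) ℝ) = 0 := by
    conv_lhs => rw [← fromBlocks_toBlocks (bm (g : Matrix (Fin 4) (Fin 4) ℝ)), fromBlocks_multiply]
    have e21 : m * (bm ((g : Matrix (Fin 4) (Fin 4) ℝ))).toBlocks₂₁ = 0 := h1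
    have e22 : m * (bm ((g : Matrix (Fin 4) (Fin 4) ℝ))).toBlocks₂₂ = 0 := h2
    rw [zero_mul, zero_mul, zero_mul, zero_mul, zero_add, zero_add, e21, e22]
    simp
  have hinv : bm (g : Matrix (Fin 4) (Fin 4) ℝ) *
      bm ((g⁻¹ : GL (Fin 4) ℝ) : Matrix (Fin 4) (Fin 4) ℝ) = 1 := by
    rw [← bm_mul, ← Units.val_mul, mul_inv_cancel, Units.val_one, bm_one]
  have hz0 : fromBlocks (0 : Matrix (Fin 2) (Fin 2) ℝ) 0 0 m = 0 := by
    calc fromBlocks (0 : Matrix (Fin 2) (Fin 2) ℝ) 0 0 m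
        = fromBlocks (0 : Matrix (Fin 2) (Fin 2) ℝ) 0 0 m *
          (bm (g : Matrix (Fin 4) (Fin 4) ℝ) *
            bm ((g⁻¹ : GL (Fin 4) ℝ) : Matrix (Fin 4) (Fin 4) ℝ)) := by rw [hinv, mul_one]
      _ = 0 := by rw [← mul_assoc, hz, zero_mul]
  have := congrArg Matrix.toBlocks₂₂ hz0
  rw [toBlocks_fromBlocks₂₂] at this
  exact this.trans rfl

lemma unit_of_det_ne {A : Matrix (Fin 2) (Fin 2) ℝ} (h : A.det ≠ 0) : IsUnit A :=
  (Matrix.isUnit_iff_isUnit_det A).mpr (isUnit_iff_ne_zero.mpr h)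

lemma rank_one_decomp {C : Matrix (Fin 2) (Fin 2) ℝ} (hC0 : C ≠ 0) (hdet : C.det = 0) :
    ∃ u v : Matrix (Fin 2) (Fin 2) ℝ, IsUnit u ∧ IsUnit v ∧ C = u * E00 * v := by
  have hd : C 0 0 * C 1 1 - C 0 1 * C 1 0 = 0 := by rw [← Matrix.det_fin_two]; exact hdet
  by_cases ha : C 0 0 ≠ 0
  · refine ⟨!![C 0 0, 0; C 1 0, 1], !![1, C 0 1 / C 0 0; 0, 1], ?_, ?_, ?_⟩
    · exact unit_of_det_ne (by simp [Matrix.det_fin_two_of, ha])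
    · exact unit_of_det_ne (by simp [Matrix.det_fin_two_of])
    · ext i j
      fin_cases i <;> fin_cases j <;>
        simp [Matrix.mul_apply, Matrix.vecMul, dotProduct, Fin.sum_univ_two, E00] <;>
        field_simp <;> linarith
  push_neg at ha
  by_cases hb : C 0 1 ≠ 0
  · have hc : C 1 0 = 0 := by
      have : C 0 1 * C 1 0 = 0 := by rw [ha] at hd; linarith
      rcases mul_eq_zero.mp this with h | h
      · exact absurd h hb
      · exact h
    refine ⟨!![C 0 1, 0; C 1 1, 1], !![0, 1; 1, 0], ?_, ?_, ?_⟩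
    · exact unit_of_det_ne (by simp [Matrix.det_fin_two_of, hb])
    · exact unit_of_det_ne (by norm_num [Matrix.det_fin_two_of])
    · ext i j
      fin_cases i <;> fin_cases j <;>
        simp [Matrix.mul_apply, Matrix.vecMul, dotProduct, Fin.sum_univ_two, E00, ha, hc]
  push_neg at hb
  by_cases hcc : C 1 0 ≠ 0
  · refine ⟨!![0, 1; 1, 0], !![C 1 0, C 1 1; 0, 1], ?_, ?_, ?_⟩
    · exact unit_of_det_ne (by norm_num [Matrix.det_fin_two_of])
    · exact unit_of_det_ne (by simp [Matrix.det_fin_two_of, hcc])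
    · ext i j
      fin_cases i <;> fin_cases j <;>
        simp [Matrix.mul_apply, Matrix.vecMul, dotProduct, Fin.sum_univ_two, E00, ha, hb]
  push_neg at hcc
  have hdd : C 1 1 ≠ 0 := by
    intro hdd
    apply hC0
    ext i j
    fin_cases i <;> fin_cases j <;> simp [ha, hb, hcc, hdd]
  refine ⟨!![0, 1; 1, 0], !![0, C 1 1; 1, 0], ?_, ?_, ?_⟩
  · exact unit_of_det_ne (by norm_num [Matrix.det_fin_two_of])
  · exact unit_of_det_ne (by simp [Matrix.det_fin_two_of, hdd])
  · ext i j
    fin_cases i <;> fin_cases j <;>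
      simp [Matrix.mul_apply, Matrix.vecMul, dotProduct, Fin.sum_univ_two, E00, ha, hb, hcc]

lemma wC0 : wC 0 = 0 := rfl
lemma wC1 : wC 1 = E01 := rfl
lemma wC2 : wC 2 = E00 := rfl
lemma wC3 : wC 3 = 1 := rfl
lemma wD0 : wD 0 = 1 := rfl
lemma wD1 : wD 1 = E11 := rfl
lemma wD2 : wD 2 = E11 := rfl
lemma wD3 : wD 3 = 0 := rfl

lemma cover (g : GL (Fin 4) ℝ) : ∃ i : Fin 4, ∃ p ∈ Pset, ∃ s ∈ Sset, g = p * w i * s := by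
  by_cases h3 : IsUnit (Cblk g)
  · refine ⟨3, (coset_iff 3 g).mpr ⟨Cblk g, 1, (Cblk g)⁻¹ * Dblk g, h3, isUnit_one, ?_, ?_⟩⟩
    · rw [wC3]; simp
    · rw [wC3, wD3]
      simp only [mul_one, mul_zero, add_zero, zero_add]
      rw [← mul_assoc, Matrix.mul_nonsing_inv _ ((Matrix.isUnit_iff_isUnit_det _).mp h3), one_mul]
  by_cases h0 : Cblk g = 0
  · have hDu : IsUnit (Dblk g) := by
      have h1 : IsUnit (bm (g : Matrix (Fin 4) (Fin 4) ℝ)).det :=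
        (Matrix.isUnit_iff_isUnit_det _).mp (bm_unit g)
      have hgB : bm (g : Matrix (Fin 4) (Fin 4) ℝ) =
          fromBlocks ((bm (g : Matrix (Fin 4) (Fin 4) ℝ)).toBlocks₁₁)
            ((bm (g : Matrix (Fin 4) (Fin 4) ℝ)).toBlocks₁₂) 0 (Dblk g) := by
        conv_lhs => rw [← fromBlocks_toBlocks (bm (g : Matrix (Fin 4) (Fin 4) ℝ))]
        rw [show (bm ((g : Matrix (Fin 4) (Fin 4) ℝ))).toBlocks₂₁ = Cblk g from rfl, h0]
        rfl
      rw [hgB, det_fromBlocks_zero₂₁] at h1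
      exact (Matrix.isUnit_iff_isUnit_det _).mpr (isUnit_of_mul_isUnit_right h1)
    refine ⟨0, (coset_iff 0 g).mpr ⟨Dblk g, 1, 0, hDu, isUnit_one, ?_, ?_⟩⟩
    · rw [wC0]; simpa using h0
    · rw [wC0, wD0]; simp
  -- rank one case
  have hdet : (Cblk g).det = 0 := by
    by_contra hne
    exact h3 (unit_of_det_ne hne)
  obtain ⟨u, v, hu, hv, hCuv⟩ := rank_one_decomp h0 hdet
  have hud : IsUnit u.det := (Matrix.isUnit_iff_isUnit_det u).mp hu
  have hvd : IsUnit v.det := (Matrix.isUnit_iff_isUnit_det v).mp hv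
  set N : Matrix (Fin 2) (Fin 2) ℝ := u⁻¹ * Dblk g * v⁻¹ with hN
  have hDuv : Dblk g = u * (N * v) := by
    rw [hN, Matrix.mul_assoc, Matrix.mul_assoc, Matrix.nonsing_inv_mul _ hvd, mul_one,
      ← Matrix.mul_assoc, Matrix.mul_nonsing_inv _ hud, one_mul]
  set d0 : ℝ := N 1 0 with hd0
  set d1 : ℝ := N 1 1 with hd1
  have hrow : ¬(d0 = 0 ∧ d1 = 0) := by
    rintro ⟨hz0, hz1⟩
    have hE11N : E11 * N = 0 := by
      ext i j
      fin_cases i <;> fin_cases j <;>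
        simp [Matrix.mul_apply, Fin.sum_univ_two, E11, ← hd0, ← hd1, hz0, hz1]
    have hE1100 : E11 * E00 = 0 := by
      ext i j; fin_cases i <;> fin_cases j <;> simp [Matrix.mul_apply, Fin.sum_univ_two, E11, E00]
    have hker1 : (E11 * u⁻¹) * Cblk g = 0 := by
      rw [hCuv]
      simp only [Matrix.mul_assoc]
      rw [← Matrix.mul_assoc u⁻¹ u, Matrix.nonsing_inv_mul _ hud, one_mul, ← Matrix.mul_assoc,
        hE1100, zero_mul]
    have hker2 : (E11 * u⁻¹) * Dblk g = 0 := by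
      rw [hDuv]
      simp only [Matrix.mul_assoc]
      rw [← Matrix.mul_assoc u⁻¹ u, Matrix.nonsing_inv_mul _ hud, one_mul, ← Matrix.mul_assoc,
        hE11N, zero_mul]
    have h11 := no_common_kernel g hker1 hker2
    have : E11 = 0 := by
      have h2 := congrArg (· * u) h11
      simpa [Matrix.mul_assoc, Matrix.nonsing_inv_mul _ hud] using h2
    have := congrFun (congrFun this 1) 1
    norm_num [E11] at this
  by_cases hd1ne : d1 ≠ 0
  · -- i = 2
    refine ⟨2, (coset_iff 2 g).mpr ⟨u, !![1,0;d0,d1] * v, E00 * (N * v), hu, ?_, ?_, ?_⟩⟩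
    · exact (unit_of_det_ne (by simp [Matrix.det_fin_two_of, hd1ne])).mul hv
    · -- C equation
      rw [wC2, hCuv]
      simp only [Matrix.mul_assoc]
      congr 1
      ext i j
      fin_cases i <;> fin_cases j <;>
        simp [Matrix.mul_apply, Matrix.vecMul, dotProduct, Fin.sum_univ_two, E00]
    · -- D equation
      rw [wC2, wD2, hDuv]
      simp only [Matrix.mul_assoc]
      rw [← mul_add]
      congr 1
      ext i j
      fin_cases i <;> fin_cases j <;>
        simp [Matrix.mul_apply, Matrix.vecMul, dotProduct, Fin.sum_univ_two, E00, E11,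
          ← hd0, ← hd1] <;> ring
  · -- i = 1
    push_neg at hd1ne
    have hd0ne : d0 ≠ 0 := by
      intro hz; exact hrow ⟨hz, hd1ne⟩
    refine ⟨1, (coset_iff 1 g).mpr ⟨u * !![d0⁻¹,0;0,1],
      !![v 1 0, v 1 1; d0 * v 0 0, d0 * v 0 1],
      !![0, 0; d0 * (N * v) 0 0, d0 * (N * v) 0 1], ?_, ?_, ?_, ?_⟩⟩
    · exact hu.mul (unit_of_det_ne (by simp [Matrix.det_fin_two_of, hd0ne]))
    · refine unit_of_det_ne ?_
      have : v.det ≠ 0 := hvd.ne_zero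
      simp only [Matrix.det_fin_two_of]
      rw [Matrix.det_fin_two] at this
      intro hzz
      apply this
      have : v 1 0 * (d0 * v 0 1) - v 1 1 * (d0 * v 0 0) = -d0 * (v 0 0 * v 1 1 - v 0 1 * v 1 0) := by ring
      rw [this] at hzz
      rcases mul_eq_zero.mp hzz with h' | h'
      · exact absurd (by linarith [neg_eq_zero.mp (by linarith : -d0 = 0)] : d0 = 0) hd0ne
      · exact h'
    · -- C equation
      rw [wC1, hCuv]
      simp only [Matrix.mul_assoc]
      congr 1
      ext i j
      fin_cases i <;> fin_cases j <;>
        simp [Matrix.mul_apply, Matrix.vecMul, dotProduct, Fin.sum_univ_two, E00, E01] <;>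
        field_simp
    · -- D equation
      rw [wC1, wD1, hDuv]
      simp only [Matrix.mul_assoc]
      rw [← mul_add]
      congr 1
      ext i j
      fin_cases i <;> fin_cases j <;>
        simp [Matrix.mul_apply, Matrix.vecMul, dotProduct, Fin.sum_univ_two, E00, E01, E11,
          ← hd0, ← hd1, hd1ne] <;>
        field_simp <;> ring

lemma sandwich (uh ua : (Matrix (Fin 2) (Fin 2) ℝ)ˣ) (Z : Matrix (Fin 2) (Fin 2) ℝ) :
    ((uh⁻¹ : (Matrix (Fin 2) (Fin 2) ℝ)ˣ) : Matrix (Fin 2) (Fin 2) ℝ) *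
      ((uh : Matrix (Fin 2) (Fin 2) ℝ) * Z * (ua : Matrix (Fin 2) (Fin 2) ℝ)) *
      ((ua⁻¹ : (Matrix (Fin 2) (Fin 2) ℝ)ˣ) : Matrix (Fin 2) (Fin 2) ℝ) = Z := by
  simp only [← mul_assoc]
  rw [show ((uh⁻¹ : (Matrix (Fin 2) (Fin 2) ℝ)ˣ) : Matrix (Fin 2) (Fin 2) ℝ) *
    (uh : Matrix (Fin 2) (Fin 2) ℝ) = 1 from uh.inv_mul, one_mul, Units.mul_inv_cancel_right]

lemma hXa_eq_zero {h a X : Matrix (Fin 2) (Fin 2) ℝ} (hh : IsUnit h) (ha : IsUnit a)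
    (hz : h * X * a = 0) : X = 0 := by
  obtain ⟨uh, rfl⟩ := hh
  obtain ⟨ua, rfl⟩ := ha
  rw [← sandwich uh ua X, hz, mul_zero, zero_mul]

lemma unit_of_hXa {h a X : Matrix (Fin 2) (Fin 2) ℝ} (hh : IsUnit h) (ha : IsUnit a)
    (hz : h * X * a = 1) : IsUnit X := by
  obtain ⟨uh, rfl⟩ := hh
  obtain ⟨ua, rfl⟩ := ha
  rw [← sandwich uh ua X, hz]
  exact ((uh⁻¹.isUnit).mul isUnit_one).mul ua⁻¹.isUnit

lemma caseA {h a c : Matrix (Fin 2) (Fin 2) ℝ} (hh : IsUnit h) (ha : IsUnit a)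
    (hC : E00 = h * E01 * a) (hD : E11 = h * E01 * c + h * E11 * a) : False := by
  obtain ⟨ua, rfl⟩ := ha
  set b : Matrix (Fin 2) (Fin 2) ℝ := ((ua⁻¹ : (Matrix (Fin 2) (Fin 2) ℝ)ˣ) : Matrix (Fin 2) (Fin 2) ℝ) with hb
  have rel1 : h * E01 = E00 * b := by
    rw [hC, mul_assoc, mul_assoc]
    rw [show ((ua : Matrix (Fin 2) (Fin 2) ℝ) * b) = 1 from by rw [hb]; exact ua.mul_inv]
    rw [mul_one]
  have rel2 : E11 * b = (h * E01) * (c * b) + h * E11 := by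
    have h4 := congrArg (fun M => M * b) hD
    rw [add_mul, mul_assoc (h * E01) c b, mul_assoc (h * E11) _ b,
      show ((ua : Matrix (Fin 2) (Fin 2) ℝ) * b) = 1 from by rw [hb]; exact ua.mul_inv,
      mul_one] at h4
    exact h4
  rw [rel1] at rel2
  have e1 : b 0 0 = 0 := by
    have := congrFun (congrFun rel1 0) 0
    simpa [Matrix.mul_apply, Matrix.vecMul, dotProduct, Fin.sum_univ_two, E00, E01] using this.symm
  have e2 : b 1 0 = 0 := by
    have := congrFun (congrFun rel2 1) 0
    simpa [Matrix.mul_apply, Matrix.vecMul, dotProduct, Fin.sum_univ_two, E00, E01, E11] using this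
  have hbu : IsUnit b.det := (Matrix.isUnit_iff_isUnit_det _).mp ua⁻¹.isUnit
  rw [Matrix.det_fin_two, e1, e2] at hbu
  simpa using hbu.ne_zero

lemma caseB {h a c : Matrix (Fin 2) (Fin 2) ℝ} (hh : IsUnit h) (ha : IsUnit a)
    (hC : E01 = h * E00 * a) (hD : E11 = h * E00 * c + h * E11 * a) : False := by
  obtain ⟨ua, rfl⟩ := ha
  set b : Matrix (Fin 2) (Fin 2) ℝ := ((ua⁻¹ : (Matrix (Fin 2) (Fin 2) ℝ)ˣ) : Matrix (Fin 2) (Fin 2) ℝ) with hb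
  have rel1 : h * E00 = E01 * b := by
    rw [hC, mul_assoc, mul_assoc]
    rw [show ((ua : Matrix (Fin 2) (Fin 2) ℝ) * b) = 1 from by rw [hb]; exact ua.mul_inv]
    rw [mul_one]
  have rel2 : E11 * b = (h * E00) * (c * b) + h * E11 := by
    have h4 := congrArg (fun M => M * b) hD
    rw [add_mul, mul_assoc (h * E00) c b, mul_assoc (h * E11) _ b,
      show ((ua : Matrix (Fin 2) (Fin 2) ℝ) * b) = 1 from by rw [hb]; exact ua.mul_inv,
      mul_one] at h4
    exact h4
  rw [rel1] at rel2
  have e1 : h 1 0 = 0 := by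
    have := congrFun (congrFun rel1 1) 0
    simpa [Matrix.mul_apply, Matrix.vecMul, dotProduct, Fin.sum_univ_two, E00, E01] using this
  have eb : b 1 1 = 0 := by
    have := congrFun (congrFun rel1 0) 1
    simpa [Matrix.mul_apply, Matrix.vecMul, dotProduct, Fin.sum_univ_two, E00, E01] using this.symm
  have e2 : h 1 1 = 0 := by
    have := congrFun (congrFun rel2 1) 1
    simpa [Matrix.mul_apply, Matrix.vecMul, dotProduct, Fin.sum_univ_two, E00, E01, E11, eb] using this.symm
  have hhu : IsUnit h.det := (Matrix.isUnit_iff_isUnit_det _).mp hh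
  rw [Matrix.det_fin_two, e1, e2] at hhu
  simpa using hhu.ne_zero

lemma E01ne : E01 ≠ (0 : Matrix (Fin 2) (Fin 2) ℝ) := by
  intro hz
  have := congrFun (congrFun hz 0) 1
  norm_num [E01] at this
lemma E00ne : E00 ≠ (0 : Matrix (Fin 2) (Fin 2) ℝ) := by
  intro hz
  have := congrFun (congrFun hz 0) 0
  norm_num [E00] at this
lemma onene : (1 : Matrix (Fin 2) (Fin 2) ℝ) ≠ 0 := by
  intro hz
  have := congrFun (congrFun hz 0) 0
  norm_num at this
lemma E01nu : ¬ IsUnit (E01 : Matrix (Fin 2) (Fin 2) ℝ) := by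
  intro hz
  have := (Matrix.isUnit_iff_isUnit_det _).mp hz
  norm_num [E01, Matrix.det_fin_two_of] at this
lemma E00nu : ¬ IsUnit (E00 : Matrix (Fin 2) (Fin 2) ℝ) := by
  intro hz
  have := (Matrix.isUnit_iff_isUnit_det _).mp hz
  norm_num [E00, Matrix.det_fin_two_of] at this

lemma distinct (i j : Fin 4) (hex : ∃ p ∈ Pset, ∃ s ∈ Sset, w j = p * w i * s) : i = j := by
  rw [coset_iff] at hex
  obtain ⟨h, a, c, hh, ha, hC, hD⟩ := hex
  have hCj : Cblk (w j) = wC j := by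
    show (bm ((w j : GL (Fin 4) ℝ) : Matrix (Fin 4) (Fin 4) ℝ)).toBlocks₂₁ = wC j
    rw [bm_w j, toBlocks_fromBlocks₂₁]
  have hDj : Dblk (w j) = wD j := by
    show (bm ((w j : GL (Fin 4) ℝ) : Matrix (Fin 4) (Fin 4) ℝ)).toBlocks₂₂ = wD j
    rw [bm_w j, toBlocks_fromBlocks₂₂]
  rw [hCj] at hC
  rw [hDj] at hD
  fin_cases i <;> fin_cases j
  · rfl
  · replace hC : E01 = h * 0 * a := hC
    simp only [mul_zero, zero_mul] at hC
    exact absurd hC E01ne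
  · replace hC : E00 = h * 0 * a := hC
    simp only [mul_zero, zero_mul] at hC
    exact absurd hC E00ne
  · replace hC : (1 : Matrix (Fin 2) (Fin 2) ℝ) = h * 0 * a := hC
    simp only [mul_zero, zero_mul] at hC
    exact absurd hC onene
  · replace hC : (0 : Matrix (Fin 2) (Fin 2) ℝ) = h * E01 * a := hC
    exact absurd (hXa_eq_zero hh ha hC.symm) E01ne
  · rfl
  · replace hC : E00 = h * E01 * a := hC
    replace hD : E11 = h * E01 * c + h * E11 * a := hD
    exact absurd (caseA hh ha hC hD) not_false
  · replace hC : (1 : Matrix (Fin 2) (Fin 2) ℝ) = h * E01 * a := hC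
    exact absurd (unit_of_hXa hh ha hC.symm) E01nu
  · replace hC : (0 : Matrix (Fin 2) (Fin 2) ℝ) = h * E00 * a := hC
    exact absurd (hXa_eq_zero hh ha hC.symm) E00ne
  · replace hC : E01 = h * E00 * a := hC
    replace hD : E11 = h * E00 * c + h * E11 * a := hD
    exact absurd (caseB hh ha hC hD) not_false
  · rfl
  · replace hC : (1 : Matrix (Fin 2) (Fin 2) ℝ) = h * E00 * a := hC
    exact absurd (unit_of_hXa hh ha hC.symm) E00nu
  · replace hC : (0 : Matrix (Fin 2) (Fin 2) ℝ) = h * 1 * a := hC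
    exact absurd (hXa_eq_zero hh ha hC.symm) onene
  · replace hC : E01 = h * 1 * a := hC
    exfalso
    apply E01nu
    rw [hC]
    exact (hh.mul isUnit_one).mul ha
  · replace hC : E00 = h * 1 * a := hC
    exfalso
    apply E00nu
    rw [hC]
    exact (hh.mul isUnit_one).mul ha
  · rfl
lemma orbit3_iff (g : GL (Fin 4) ℝ) :
    (∃ p ∈ Pset, ∃ s ∈ Sset, g = p * w 3 * s) ↔ (Cblk g).det ≠ 0 := by
  rw [coset_iff]
  constructor
  · rintro ⟨h, a, c, hh, ha, hC, hD⟩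
    rw [wC3] at hC
    have : IsUnit (Cblk g) := by rw [hC]; exact (hh.mul isUnit_one).mul ha
    exact ((Matrix.isUnit_iff_isUnit_det _).mp this).ne_zero
  · intro hne
    refine ⟨Cblk g, 1, (Cblk g)⁻¹ * Dblk g, unit_of_det_ne hne, isUnit_one, ?_, ?_⟩
    · rw [wC3]; simp
    · rw [wC3, wD3]
      simp only [mul_one, mul_zero, add_zero, zero_add]
      rw [← mul_assoc, Matrix.mul_nonsing_inv _ (isUnit_iff_ne_zero.mpr hne), one_mul]

lemma orbit3_open : IsOpen {g : GL (Fin 4) ℝ | ∃ p ∈ Pset, ∃ s ∈ Sset, g = p * w 3 * s} := by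
  have hset : {g : GL (Fin 4) ℝ | ∃ p ∈ Pset, ∃ s ∈ Sset, g = p * w 3 * s} =
      (fun g : GL (Fin 4) ℝ => (Cblk g).det) ⁻¹' {(0 : ℝ)}ᶜ := by
    ext g
    simp only [Set.mem_setOf_eq, Set.mem_preimage, Set.mem_compl_iff, Set.mem_singleton_iff]
    exact orbit3_iff g
  rw [hset]
  have hcont : Continuous fun g : GL (Fin 4) ℝ => (Cblk g).det := by
    have : (fun g : GL (Fin 4) ℝ => (Cblk g).det) =
        fun g : GL (Fin 4) ℝ => (((g : Matrix (Fin 4) (Fin 4) ℝ)).submatrix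
          (fun i : Fin 2 => e4 (Sum.inr i)) (fun j : Fin 2 => e4 (Sum.inl j))).det := rfl
    rw [this]
    exact ((Units.continuous_val).matrix_submatrix _ _).matrix_det
  exact hcont.isOpen_preimage _ (isOpen_compl_singleton)

lemma w3_sq : w 3 * w 3 = 1 := by
  have hσ : (σs 3)⁻¹ = σs 3 := by decide
  apply Units.ext
  rw [Units.val_mul]
  show permMat (σs 3) * permMat (σs 3) = 1
  conv_lhs => rw [show permMat (σs 3) * permMat (σs 3) =
    permMat (σs 3) * permMat (σs 3)⁻¹ from by rw [hσ]]
  exact permMat_mul_inv _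

lemma w3_inv : (w 3)⁻¹ = w 3 := by
  rw [← mul_one (w 3)⁻¹, ← w3_sq, ← mul_assoc, inv_mul_cancel, one_mul]

lemma stab (x : GL (Fin 4) ℝ) :
    ((w 3 * x * (w 3)⁻¹ ∈ Pset) ∧ x ∈ Sset) ↔
      ∃ a : GL (Fin 2) ℝ, (x : Matrix (Fin 4) (Fin 4) ℝ) =
        Matrix.reindex finSumFinEquiv finSumFinEquiv
          (Matrix.fromBlocks (a : Matrix (Fin 2) (Fin 2) ℝ) 0 0
            (a : Matrix (Fin 2) (Fin 2) ℝ)) := by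
  have hw3 : bm ((w 3 : GL (Fin 4) ℝ) : Matrix (Fin 4) (Fin 4) ℝ) =
      fromBlocks 0 1 1 0 := bm_w 3
  constructor
  · rintro ⟨hP, hS⟩
    obtain ⟨hs21, hsdiag⟩ := (Sset_iff x).mp hS
    obtain ⟨A, hA⟩ : ∃ A, (bm (x : Matrix (Fin 4) (Fin 4) ℝ)).toBlocks₁₁ = A := ⟨_, rfl⟩
    obtain ⟨B, hB⟩ : ∃ B, (bm (x : Matrix (Fin 4) (Fin 4) ℝ)).toBlocks₁₂ = B := ⟨_, rfl⟩
    have hxB : bm (x : Matrix (Fin 4) (Fin 4) ℝ) = fromBlocks A B 0 A := by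
      conv_lhs => rw [← fromBlocks_toBlocks (bm (x : Matrix (Fin 4) (Fin 4) ℝ))]
      rw [hs21, ← hsdiag, hA, hB]
    have h21 := (Pset_iff _).mp hP
    have hconj : bm ((w 3 * x * (w 3)⁻¹ : GL (Fin 4) ℝ) : Matrix (Fin 4) (Fin 4) ℝ) =
        bm ((w 3 : GL (Fin 4) ℝ) : Matrix (Fin 4) (Fin 4) ℝ) *
          bm (x : Matrix (Fin 4) (Fin 4) ℝ) *
          bm ((w 3 : GL (Fin 4) ℝ) : Matrix (Fin 4) (Fin 4) ℝ) := by
      rw [Units.val_mul, Units.val_mul, bm_mul, bm_mul, w3_inv]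
    rw [hconj, hw3] at h21
    conv_lhs at h21 => rw [hxB]
    rw [fromBlocks_multiply, fromBlocks_multiply, toBlocks_fromBlocks₂₁] at h21
    simp only [zero_mul, mul_zero, mul_one, one_mul, add_zero, zero_add] at h21
    -- h21 : B = 0
    have hxB' : bm (x : Matrix (Fin 4) (Fin 4) ℝ) = fromBlocks A 0 0 A := by
      rw [hxB, h21]
    have hAu : IsUnit A := by
      have h1 : IsUnit (bm (x : Matrix (Fin 4) (Fin 4) ℝ)).det :=
        (Matrix.isUnit_iff_isUnit_det _).mp (bm_unit x)
      rw [hxB', det_fromBlocks_zero₂₁] at h1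
      exact (Matrix.isUnit_iff_isUnit_det _).mpr (isUnit_of_mul_isUnit_right h1)
    refine ⟨hAu.unit, ?_⟩
    rw [Matrix.reindex_apply, IsUnit.unit_spec]
    have hxid : ((x : Matrix (Fin 4) (Fin 4) ℝ).submatrix ⇑e4 ⇑e4).submatrix ⇑e4.symm ⇑e4.symm =
        (x : Matrix (Fin 4) (Fin 4) ℝ) := by
      rw [Matrix.submatrix_submatrix, Equiv.self_comp_symm, Matrix.submatrix_id_id]
    conv_lhs => rw [← hxid]
    exact congrArg (fun M => M.submatrix (⇑e4.symm) (⇑e4.symm)) hxB'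
  · rintro ⟨a, hx⟩
    have hbmx : bm (x : Matrix (Fin 4) (Fin 4) ℝ) =
        fromBlocks (a : Matrix (Fin 2) (Fin 2) ℝ) 0 0 (a : Matrix (Fin 2) (Fin 2) ℝ) := by
      rw [bm, hx, Matrix.reindex_apply, Matrix.submatrix_submatrix, Equiv.symm_comp_self,
        Matrix.submatrix_id_id]
    constructor
    · rw [Pset_iff]
      have hconj : bm ((w 3 * x * (w 3)⁻¹ : GL (Fin 4) ℝ) : Matrix (Fin 4) (Fin 4) ℝ) =
          bm ((w 3 : GL (Fin 4) ℝ) : Matrix (Fin 4) (Fin 4) ℝ) *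
            bm (x : Matrix (Fin 4) (Fin 4) ℝ) *
            bm ((w 3 : GL (Fin 4) ℝ) : Matrix (Fin 4) (Fin 4) ℝ) := by
        rw [Units.val_mul, Units.val_mul, bm_mul, bm_mul, w3_inv]
      rw [hconj, hw3, hbmx, fromBlocks_multiply, fromBlocks_multiply, toBlocks_fromBlocks₂₁]
      simp
    · rw [Sset_iff, hbmx]
      simp [toBlocks_fromBlocks₂₁, toBlocks_fromBlocks₁₁, toBlocks_fromBlocks₂₂]

theorem shalika_orbits_GL4 :
    -- the four double cosets cover `GL₄(ℝ)`
    (∀ g : GL (Fin 4) ℝ, ∃ i : Fin 4, ∃ p ∈ Pset, ∃ s ∈ Sset, g = p * w i * s) ∧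
    -- the four orbits are pairwise distinct
    (∀ i j : Fin 4, (∃ p ∈ Pset, ∃ s ∈ Sset, w j = p * w i * s) → i = j) ∧
    -- the orbit of `σ₄` is open
    IsOpen {g : GL (Fin 4) ℝ | ∃ p ∈ Pset, ∃ s ∈ Sset, g = p * w 3 * s} ∧
    -- the stabilizer `P^{σ₄} ∩ S₄ ≅ GL₂(ℝ)` (diagonally embedded)
    (∀ x : GL (Fin 4) ℝ,
      ((w 3 * x * (w 3)⁻¹ ∈ Pset) ∧ x ∈ Sset) ↔
        ∃ a : GL (Fin 2) ℝ, (x : Matrix (Fin 4) (Fin 4) ℝ) =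
          Matrix.reindex finSumFinEquiv finSumFinEquiv
            (Matrix.fromBlocks (a : Matrix (Fin 2) (Fin 2) ℝ) 0 0
              (a : Matrix (Fin 2) (Fin 2) ℝ))) := by
  exact ⟨cover, distinct, orbit3_open, stab⟩
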